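/- Let n ≥ 2 and let Φ_D = {±e_j ± e_k : 1 ≤ j < k ≤ n} (all four sign combinations) be the set of roots of type D_n in ℝ^n, whose root lattice is the even sublattice N = {a ∈ ℤ^n : a_1 + ⋯ + a_n is even} and whose dual lattice is M = ℤ^n + ℤ·(1/2, …, 1/2). Let F = {u ∈ ℝ^n : −1 ≤ ⟨u, v⟩ ≤ 1 for all v ∈ Φ_D}. Then for every odd integer q ≥ 3 and every w ∈ (1/q)M, there exists u ∈ (1/q)M with u − w ∈ M and u lying in the topological interior of F. (Consequently, every lattice polytope cut out by D_n is diagonally split for every odd q.) -/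

import Mathlib

open Finset

/-- The `i`-th standard basis vector of `ℝ^n`. -/
noncomputable def stdBasis (n : ℕ) (i : Fin n) : Fin n → ℝ := fun j => if j = i then 1 else 0

/-- The standard inner product on `ℝ^n`. -/
noncomputable def innerProd {n : ℕ} (u v : Fin n → ℝ) : ℝ := ∑ i, u i * v i

/-- The roots of type `D_n`: `±e_j ± e_k` for `j < k` (all four sign choices). -/
def typeD (n : ℕ) : Set (Fin n → ℝ) :=
  {v | ∃ j k, j < k ∧ ∃ ε δ : ℝ, (ε = 1 ∨ ε = -1) ∧ (δ = 1 ∨ δ = -1) ∧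
    v = ε • stdBasis n j + δ • stdBasis n k}

/-- The lattice `M = ℤ^n + ℤ·(1/2, …, 1/2) ⊆ ℝ^n`, the union of `ℤ^n` and its translate by
`(1/2, …, 1/2)`. -/
def halfLattice (n : ℕ) : Set (Fin n → ℝ) :=
  {u | (∀ i, ∃ m : ℤ, u i = m) ∨ (∀ i, ∃ m : ℤ, u i = m + 1/2)}

/-- The diagonal splitting polytope `F = {u | -1 ≤ ⟨u,v⟩ ≤ 1 for all v ∈ Φ}`. -/
def splitPolytope (n : ℕ) (Φ : Set (Fin n → ℝ)) : Set (Fin n → ℝ) :=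
  {u | ∀ v ∈ Φ, -1 ≤ innerProd u v ∧ innerProd u v ≤ 1}

lemma centered_residue (q : ℤ) (hq : 3 ≤ q) (hodd : Odd q) (a : ℤ) :
    ∃ t k : ℤ, t = a + q * k ∧ 2 * |t| ≤ q - 1 := by
  have hq0 : 0 < q := by omega
  have hb0 : 0 ≤ a % q := Int.emod_nonneg a (by omega)
  have hbq : a % q < q := Int.emod_lt_of_pos a hq0
  have hdef : a % q = a - q * (a / q) := by rw [Int.emod_def]
  obtain ⟨c, hc⟩ := hodd
  by_cases h : 2 * (a % q) ≤ q - 1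
  · exact ⟨a % q, -(a / q), by rw [hdef]; ring, by rw [abs_of_nonneg hb0]; omega⟩
  · refine ⟨a % q - q, -(a / q) - 1, by rw [hdef]; ring, ?_⟩
    rw [abs_of_nonpos (by omega)]
    omega

lemma inner_basis {n : ℕ} (u : Fin n → ℝ) (j k : Fin n) (hjk : j ≠ k) (ε δ : ℝ) :
    innerProd u (ε • stdBasis n j + δ • stdBasis n k) = ε * u j + δ * u k := by
  unfold innerProd stdBasis
  simp only [Pi.add_apply, Pi.smul_apply, smul_eq_mul, mul_add, mul_ite, mul_one, mul_zero,
    Finset.sum_add_distrib, Finset.sum_ite_eq', Finset.mem_univ, if_true]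
  ring

lemma mem_interior_split {n : ℕ} (u : Fin n → ℝ) (r : ℝ) (hr : 0 < r)
    (hu : ∀ i, |u i| + r ≤ 1/2) :
    u ∈ interior (splitPolytope n (typeD n)) := by
  rw [mem_interior]
  refine ⟨Metric.ball u r, ?_, Metric.isOpen_ball, Metric.mem_ball_self hr⟩
  intro u' hu' v hv
  obtain ⟨j, k, hjk, ε, δ, hε, hδ, rfl⟩ := hv
  rw [inner_basis u' j k (ne_of_lt hjk) ε δ]
  have key : ∀ i, |u' i| < 1/2 := by
    intro i
    have h1 : dist (u' i) (u i) ≤ dist u' u := dist_le_pi_dist u' u i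
    have h2 : dist u' u < r := Metric.mem_ball.mp hu'
    have h3 : |u' i - u i| < r := by rw [← Real.dist_eq]; linarith
    have := hu i
    have := abs_sub_abs_le_abs_sub (u' i) (u i)
    linarith
  have hε1 : |ε| = 1 := by rcases hε with h | h <;> simp [h]
  have hδ1 : |δ| = 1 := by rcases hδ with h | h <;> simp [h]
  have : |ε * u' j + δ * u' k| < 1 := by
    calc |ε * u' j + δ * u' k| ≤ |ε * u' j| + |δ * u' k| := abs_add_le _ _
      _ = |u' j| + |u' k| := by rw [abs_mul, abs_mul, hε1, hδ1, one_mul, one_mul]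
      _ < 1 := by have := key j; have := key k; linarith
  constructor <;> [linarith [neg_abs_le (ε * u' j + δ * u' k)]; linarith [le_abs_self (ε * u' j + δ * u' k)]]

/-- Every lattice polytope cut out by `D_n` is diagonally split for every odd `q ≥ 3`:
the interior of the diagonal splitting polytope of `D_n` contains a representative of
every equivalence class in `(1/q)M / M`, where `M = ℤ^n + ℤ·(1/2,…,1/2)` is the dual of
the root lattice. -/
theorem typeD_diagonally_split (n : ℕ) (hn : 2 ≤ n) (q : ℤ) (hq : 3 ≤ q) (hodd : Odd q)
    (w : Fin n → ℝ) (hw : (q : ℝ) • w ∈ halfLattice n) :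
    ∃ u : Fin n → ℝ, (q : ℝ) • u ∈ halfLattice n ∧ u - w ∈ halfLattice n ∧
      u ∈ interior (splitPolytope n (typeD n)) := by
  have hq0 : (0:ℝ) < (q:ℝ) := by exact_mod_cast (by omega : (0:ℤ) < q)
  have hqne : (q:ℝ) ≠ 0 := ne_of_gt hq0
  have hqr : (3:ℝ) ≤ (q:ℝ) := by exact_mod_cast hq
  -- bound helper
  have bound : ∀ t : ℤ, 2 * |t| ≤ q - 1 → |(t:ℝ)/q| + 1/(2*q) ≤ 1/2 := by
    intro t ht
    have h1 : |(t:ℝ)| ≤ ((q:ℝ) - 1)/2 := by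
      have : (2:ℝ) * |(t:ℝ)| ≤ (q:ℝ) - 1 := by
        rw [← Int.cast_abs]; exact_mod_cast ht
      linarith
    rw [abs_div, abs_of_pos hq0]
    rw [div_add_div _ _ hqne (by positivity), div_le_iff₀ (by positivity)]
    nlinarith
  rcases hw with hint | hhalf
  · -- integer case
    choose a ha using hint
    have ha' : ∀ i, (q:ℝ) * w i = a i := by
      intro i; have := ha i; simpa [Pi.smul_apply, smul_eq_mul] using this
    choose t k htk hts using fun i => centered_residue q hq hodd (a i)
    refine ⟨fun i => (t i : ℝ)/q, Or.inl fun i => ⟨t i, by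
      simp only [Pi.smul_apply, smul_eq_mul]; field_simp⟩, Or.inl fun i => ⟨k i, ?_⟩, ?_⟩
    · have h1 : (t i : ℝ) = a i + q * k i := by exact_mod_cast congrArg Int.cast (htk i)
      have h2 : w i = (a i : ℝ)/q := by rw [eq_div_iff hqne]; linarith [ha' i]
      simp only [Pi.sub_apply]
      rw [h1, h2]
      field_simp
      ring
    · exact mem_interior_split _ (1/(2*q)) (by positivity) fun i => bound (t i) (hts i)
  · -- half-integer case
    choose m hm using hhalf
    have hm' : ∀ i, (q:ℝ) * w i = m i + 1/2 := by
      intro i; have := hm i; simpa [Pi.smul_apply, smul_eq_mul] using this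
    obtain ⟨c, hc⟩ := hodd
    choose t k htk hts using fun i => centered_residue q hq (⟨c, hc⟩) (m i + c + 1)
    refine ⟨fun i => (t i : ℝ)/q, Or.inl fun i => ⟨t i, by
      simp only [Pi.smul_apply, smul_eq_mul]; field_simp⟩, Or.inr fun i => ⟨k i, ?_⟩, ?_⟩
    · have h1 : (t i : ℝ) = (m i : ℝ) + c + 1 + q * k i := by exact_mod_cast congrArg Int.cast (htk i)
      have h2 : w i = ((m i : ℝ) + 1/2)/q := by rw [eq_div_iff hqne]; linarith [hm' i]
      have hcq : (q:ℝ) = 2*(c:ℝ) + 1 := by exact_mod_cast congrArg Int.cast hc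
      simp only [Pi.sub_apply]
      rw [h1, h2]
      field_simp
      ring_nf
      nlinarith [hcq]
    · exact mem_interior_split _ (1/(2*q)) (by positivity) fun i => bound (t i) (hts i)
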